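/- With x = √(1 - 2τ/λ), one has s_{d,θ,ℓ}(τ) = x^{d-ℓ}·Σ_{r=0}^{ℓ} s_{d,θ,r}(0)·C(d-r, ℓ-r)·(1-x)^{ℓ-r}, where the functions s_{d,θ,ℓ} satisfy the recursive linear ODE system s_{d,θ,ℓ}'(u) = (d-ℓ+1)s_{d,θ,ℓ-1}(u) - (d-ℓ)s_{d,θ,ℓ}(u) and s_{d,θ,0}'(u) = -d·s_{d,θ,0}(u) in the time variable u = -½ln(λ-2τ). -/

import Mathlib

noncomputable def Fc (S : ℕ → ℝ → ℝ) (d : ℕ) (u0 : ℝ) (ℓ : ℕ) (u : ℝ) : ℝ :=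
  ∑ r ∈ Finset.range (ℓ+1), S r u0 * ((d - r).choose (ℓ - r) : ℝ) *
    (Real.exp (u0 - u) ^ (d - ℓ) * (1 - Real.exp (u0 - u)) ^ (ℓ - r))

lemma hasDerivAt_xexp (u0 u : ℝ) :
    HasDerivAt (fun w => Real.exp (u0 - w)) (-Real.exp (u0 - u)) u := by
  have := ((hasDerivAt_id u).const_sub u0).exp
  simpa using this

lemma hasDerivAt_xpow (u0 : ℝ) (n : ℕ) (u : ℝ) :
    HasDerivAt (fun w => Real.exp (u0 - w) ^ n) (-(n:ℝ) * Real.exp (u0 - u) ^ n) u := by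
  have h := (hasDerivAt_xexp u0 u).pow n
  cases n with
  | zero => exact h.congr_deriv (by simp)
  | succ m =>
    refine h.congr_deriv ?_
    simp [pow_succ]
    ring

lemma hasDerivAt_ompow (u0 : ℝ) (n : ℕ) (u : ℝ) :
    HasDerivAt (fun w => (1 - Real.exp (u0 - w)) ^ n)
      ((n:ℝ) * (1 - Real.exp (u0 - u)) ^ (n - 1) * Real.exp (u0 - u)) u := by
  have h := ((hasDerivAt_xexp u0 u).const_sub 1).pow n
  refine h.congr_deriv ?_
  ring

lemma Fc_deriv_zero (S : ℕ → ℝ → ℝ) (d : ℕ) (u0 u : ℝ) :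
    HasDerivAt (Fc S d u0 0) (-(d:ℝ) * Fc S d u0 0 u) u := by
  have h := ((hasDerivAt_xpow u0 (d - 0) u).mul (hasDerivAt_ompow u0 (0 - 0) u)).const_mul
      (S 0 u0 * ((d - 0).choose (0 - 0) : ℝ))
  have he : Fc S d u0 0 = fun w => S 0 u0 * ((d - 0).choose (0 - 0) : ℝ) *
      (Real.exp (u0 - w) ^ (d - 0) * (1 - Real.exp (u0 - w)) ^ (0 - 0)) := by
    funext w
    unfold Fc
    rw [Finset.sum_range_one]
  rw [he]
  refine h.congr_deriv ?_
  simp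
  ring

lemma Fc_deriv_succ (S : ℕ → ℝ → ℝ) (d : ℕ) (u0 : ℝ) (m : ℕ) (hm : m + 1 ≤ d) (u : ℝ) :
    HasDerivAt (Fc S d u0 (m+1))
      (((d:ℝ) - (m+1) + 1) * Fc S d u0 m u - ((d:ℝ) - (m+1)) * Fc S d u0 (m+1) u) u := by
  have hterm : ∀ r : ℕ,
      HasDerivAt (fun w => S r u0 * ((d - r).choose (m+1-r) : ℝ) *
          (Real.exp (u0 - w) ^ (d - (m+1)) * (1 - Real.exp (u0 - w)) ^ (m+1-r)))
        (S r u0 * ((d - r).choose (m+1-r) : ℝ) *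
          ((-((d - (m+1) : ℕ):ℝ) * Real.exp (u0 - u) ^ (d - (m+1))) * (1 - Real.exp (u0 - u)) ^ (m+1-r)
            + Real.exp (u0 - u) ^ (d - (m+1)) *
              (((m+1-r : ℕ):ℝ) * (1 - Real.exp (u0 - u)) ^ (m+1-r-1) * Real.exp (u0 - u)))) u := by
    intro r
    exact ((hasDerivAt_xpow u0 (d - (m+1)) u).mul (hasDerivAt_ompow u0 (m+1-r) u)).const_mul _
  have hsum : HasDerivAt (Fc S d u0 (m+1))
      (∑ r ∈ Finset.range (m+2), S r u0 * ((d - r).choose (m+1-r) : ℝ) *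
          ((-((d - (m+1) : ℕ):ℝ) * Real.exp (u0 - u) ^ (d - (m+1))) * (1 - Real.exp (u0 - u)) ^ (m+1-r)
            + Real.exp (u0 - u) ^ (d - (m+1)) *
              (((m+1-r : ℕ):ℝ) * (1 - Real.exp (u0 - u)) ^ (m+1-r-1) * Real.exp (u0 - u)))) u := by
    exact HasDerivAt.fun_sum (fun r _ => hterm r)
  have key : (∑ r ∈ Finset.range (m+2), S r u0 * ((d - r).choose (m+1-r) : ℝ) *
          ((-((d - (m+1) : ℕ):ℝ) * Real.exp (u0 - u) ^ (d - (m+1))) * (1 - Real.exp (u0 - u)) ^ (m+1-r)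
            + Real.exp (u0 - u) ^ (d - (m+1)) *
              (((m+1-r : ℕ):ℝ) * (1 - Real.exp (u0 - u)) ^ (m+1-r-1) * Real.exp (u0 - u))))
      = ((d:ℝ) - (m+1) + 1) * Fc S d u0 m u - ((d:ℝ) - (m+1)) * Fc S d u0 (m+1) u := by
    have h1 : (∑ r ∈ Finset.range (m+2), S r u0 * ((d - r).choose (m+1-r) : ℝ) *
          ((-((d - (m+1) : ℕ):ℝ) * Real.exp (u0 - u) ^ (d - (m+1))) * (1 - Real.exp (u0 - u)) ^ (m+1-r)
            + Real.exp (u0 - u) ^ (d - (m+1)) *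
              (((m+1-r : ℕ):ℝ) * (1 - Real.exp (u0 - u)) ^ (m+1-r-1) * Real.exp (u0 - u))))
        = (-((d - (m+1) : ℕ):ℝ)) * Fc S d u0 (m+1) u
          + ∑ r ∈ Finset.range (m+2), S r u0 * ((d - r).choose (m+1-r) : ℝ) *
              (Real.exp (u0 - u) ^ (d - (m+1)) *
                (((m+1-r : ℕ):ℝ) * (1 - Real.exp (u0 - u)) ^ (m+1-r-1) * Real.exp (u0 - u))) := by
      unfold Fc
      rw [Finset.mul_sum, ← Finset.sum_add_distrib]
      apply Finset.sum_congr rfl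
      intro r _
      ring
    have h2 : (∑ r ∈ Finset.range (m+2), S r u0 * ((d - r).choose (m+1-r) : ℝ) *
              (Real.exp (u0 - u) ^ (d - (m+1)) *
                (((m+1-r : ℕ):ℝ) * (1 - Real.exp (u0 - u)) ^ (m+1-r-1) * Real.exp (u0 - u))))
        = ((d:ℝ) - (m+1) + 1) * Fc S d u0 m u := by
      rw [Finset.sum_range_succ]
      have hlast : S (m+1) u0 * ((d - (m+1)).choose (m+1-(m+1)) : ℝ) *
              (Real.exp (u0 - u) ^ (d - (m+1)) *
                (((m+1-(m+1) : ℕ):ℝ) * (1 - Real.exp (u0 - u)) ^ (m+1-(m+1)-1) * Real.exp (u0 - u))) = 0 := by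
        simp
      rw [hlast, add_zero]
      unfold Fc
      rw [Finset.mul_sum]
      apply Finset.sum_congr rfl
      intro r hr
      rw [Finset.mem_range] at hr
      have hr' : r ≤ m := by omega
      have e1 : m + 1 - r - 1 = m - r := by omega
      have e2 : d - m = (d - (m+1)) + 1 := by omega
      have hnat : (d - r).choose (m+1-r) * (m+1-r) = (d - r).choose (m-r) * (d - m) := by
        have := Nat.choose_succ_right_eq (d - r) (m - r)
        have e3 : m - r + 1 = m + 1 - r := by omega
        have e4 : d - r - (m - r) = d - m := by omega
        rw [e3, e4] at this
        exact this
      have hcast : ((d - r).choose (m+1-r) : ℝ) * ((m+1-r : ℕ):ℝ)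
          = ((d - r).choose (m-r) : ℝ) * ((d:ℝ) - (m+1) + 1) := by
        have := congrArg (fun n : ℕ => (n : ℝ)) hnat
        push_cast at this
        rw [this]
        have : ((d - m : ℕ) : ℝ) = (d:ℝ) - (m+1) + 1 := by
          have : m ≤ d := by omega
          push_cast [Nat.cast_sub this]
          ring
        rw [this]
      rw [e1, e2, pow_succ]
      linear_combination (S r u0 * Real.exp (u0 - u) ^ (d - (m+1)) * Real.exp (u0 - u)
        * (1 - Real.exp (u0 - u)) ^ (m-r)) * hcast
    rw [h1, h2]
    have hc : ((d - (m+1) : ℕ) : ℝ) = (d:ℝ) - (m+1) := by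
      push_cast [Nat.cast_sub hm]
      ring
    rw [hc]
    ring
  exact key ▸ hsum

lemma Fc_at_u0 (S : ℕ → ℝ → ℝ) (d : ℕ) (u0 : ℝ) (ℓ : ℕ) :
    Fc S d u0 ℓ u0 = S ℓ u0 := by
  unfold Fc
  rw [Finset.sum_range_succ]
  have h1 : ∀ r ∈ Finset.range ℓ, S r u0 * ((d - r).choose (ℓ - r) : ℝ) *
      (Real.exp (u0 - u0) ^ (d - ℓ) * (1 - Real.exp (u0 - u0)) ^ (ℓ - r)) = 0 := by
    intro r hr
    rw [Finset.mem_range] at hr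
    have : (1 - Real.exp (u0 - u0)) ^ (ℓ - r) = 0 := by
      simp [Real.exp_zero]
      omega
    rw [this]; ring
  rw [Finset.sum_eq_zero h1]
  simp [Real.exp_zero]

lemma zero_of_ode (h : ℝ → ℝ) (c u0 : ℝ) (hder : ∀ u, HasDerivAt h (c * h u) u)
    (h0 : h u0 = 0) : ∀ u, h u = 0 := by
  intro u
  have key : ∀ v : ℝ, HasDerivAt (fun w => h w * Real.exp (-c * w)) 0 v := by
    intro v
    have he : HasDerivAt (fun w => Real.exp (-c * w)) (Real.exp (-c * v) * (-c * 1)) v :=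
      ((hasDerivAt_id v).const_mul (-c)).exp
    have := (hder v).mul he
    refine this.congr_deriv ?_
    ring
  have hconst : h u * Real.exp (-c * u) = h u0 * Real.exp (-c * u0) := by
    have : ∀ v, deriv (fun w => h w * Real.exp (-c * w)) v = 0 :=
      fun v => (key v).deriv
    exact is_const_of_deriv_eq_zero (fun v => (key v).differentiableAt) this u u0
  rw [h0, zero_mul] at hconst
  rcases mul_eq_zero.mp hconst with hh | hh
  · exact hh
  · exact absurd hh (Real.exp_ne_zero _)

theorem stmt_7 (lam : ℝ) (hlam : 0 < lam) (d θ : ℕ) (hd : 1 ≤ d) (hθ : 1 ≤ θ) (hθd : θ ≤ d)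
    (S : ℕ → ℝ → ℝ)
    (hS0 : ∀ u : ℝ, HasDerivAt (S 0) (-(d:ℝ) * S 0 u) u)
    (hSl : ∀ ℓ, 1 ≤ ℓ → ℓ < θ → ∀ u : ℝ, HasDerivAt (S ℓ)
      (((d:ℝ) - ℓ + 1) * S (ℓ-1) u - ((d:ℝ) - ℓ) * S ℓ u) u) :
    ∀ τ ∈ Set.Ico (0:ℝ) (lam/2), ∀ ℓ < θ,
      S ℓ (-(1/2) * Real.log (lam - 2*τ)) =
        Real.sqrt (1 - 2*τ/lam) ^ (d - ℓ) *
        ∑ r ∈ Finset.range (ℓ+1),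
          S r (-(1/2) * Real.log lam) * ((d - r).choose (ℓ - r) : ℝ) *
            (1 - Real.sqrt (1 - 2*τ/lam)) ^ (ℓ - r) := by
  intro τ hτ
  obtain ⟨hτ0, hτlt⟩ := hτ
  have hpos : 0 < lam - 2*τ := by linarith
  set u0 : ℝ := -(1/2) * Real.log lam with hu0
  set u : ℝ := -(1/2) * Real.log (lam - 2*τ) with hu
  have ha : 0 < (lam - 2*τ)/lam := div_pos hpos hlam
  have hx : Real.exp (u0 - u) = Real.sqrt (1 - 2*τ/lam) := by
    have h1 : 1 - 2*τ/lam = (lam - 2*τ)/lam := by field_simp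
    rw [h1]
    have h2 : Real.exp (u0 - u) = Real.exp (Real.log (Real.sqrt ((lam - 2*τ)/lam))) := by
      rw [Real.log_sqrt ha.le]
      congr 1
      rw [hu0, hu, Real.log_div (ne_of_gt hpos) (ne_of_gt hlam)]
      ring
    rw [h2, Real.exp_log (Real.sqrt_pos.mpr ha)]
  have key : ∀ ℓ, ℓ < θ → ∀ v, S ℓ v = Fc S d u0 ℓ v := by
    intro ℓ
    induction ℓ with
    | zero =>
      intro _ v
      have hz := zero_of_ode (fun w => S 0 w - Fc S d u0 0 w) (-(d:ℝ)) u0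
        (fun w => by
          have h := (hS0 w).sub (Fc_deriv_zero S d u0 w)
          refine h.congr_deriv ?_
          ring)
        (by simp [Fc_at_u0])
      have h5 : S 0 v - Fc S d u0 0 v = 0 := hz v
      linarith
    | succ m ih =>
      intro hℓ v
      have hmθ : m < θ := by omega
      have hmd : m + 1 ≤ d := by omega
      have hz := zero_of_ode (fun w => S (m+1) w - Fc S d u0 (m+1) w) (-((d:ℝ) - (m+1))) u0
        (fun w => by
          have h1 := hSl (m+1) (by omega) hℓ w
          simp only [Nat.add_sub_cancel] at h1
          have h2 := Fc_deriv_succ S d u0 m hmd w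
          have h3 := h1.sub h2
          have h4 : S m w = Fc S d u0 m w := ih hmθ w
          refine h3.congr_deriv ?_
          rw [h4]
          push_cast
          ring)
        (by simp [Fc_at_u0])
      have h5 : S (m+1) v - Fc S d u0 (m+1) v = 0 := hz v
      linarith
  intro ℓ hℓ
  rw [key ℓ hℓ u, ← hx]
  unfold Fc
  rw [Finset.mul_sum]
  apply Finset.sum_congr rfl
  intro r _
  ring
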